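/- arXiv:1201.5989 — 5 statements merged into one kernel-verified Lean document; each statement's English description precedes it below -/
import Mathlib

section
/- For n > k \geq 1, the lattice (additive subgroup of Z^n) generated by the vectors e_S for S ranging over all k-element subsets of [n] is exactly the set of integer vectors whose coordinate sum is divisible by k. -/
/-- For `n > k ≥ 1`, the additive subgroup of `ℤ^n` generated by the vectors `e_S`, for `S`
ranging over the `k`-element subsets of `[n]`, is exactly the set of integer vectors whose
coordinate sum is divisible by `k`. -/
theorem lattice_of_uniform_edges (n k : ℕ) (hk : 1 ≤ k) (hkn : k < n) (d : Fin n → ℤ) :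
    d ∈ AddSubgroup.closure
        {v : Fin n → ℤ | ∃ S : Finset (Fin n), S.card = k ∧
          v = fun i => if i ∈ S then 1 else 0} ↔
      (k : ℤ) ∣ ∑ i, d i := by
  set gen : Set (Fin n → ℤ) := {v : Fin n → ℤ | ∃ S : Finset (Fin n), S.card = k ∧
          v = fun i => if i ∈ S then 1 else 0} with hgen
  have sum_indicator : ∀ S : Finset (Fin n),
      (∑ i, (if i ∈ S then (1:ℤ) else 0)) = S.card := by
    intro S
    rw [Finset.sum_ite_mem, Finset.univ_inter, Finset.sum_const, nsmul_eq_mul, mul_one]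
  constructor
  · intro h
    have hle : AddSubgroup.closure gen ≤
        { carrier := {d : Fin n → ℤ | (k:ℤ) ∣ ∑ i, d i}
          zero_mem' := by simp
          add_mem' := by
            intro a b ha hb
            simpa [Finset.sum_add_distrib] using dvd_add ha hb
          neg_mem' := by
            intro a ha
            simpa [dvd_neg] using ha } := by
      rw [AddSubgroup.closure_le]
      rintro v ⟨S, hS, rfl⟩
      show (k:ℤ) ∣ ∑ i, (if i ∈ S then (1:ℤ) else 0)
      rw [sum_indicator, hS]
    exact hle h
  · rintro ⟨m, hm⟩
    obtain ⟨S0, -, hS0⟩ := Finset.exists_subset_card_eq (s := (Finset.univ : Finset (Fin n))) (n := k)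
      (by rw [Finset.card_univ, Fintype.card_fin]; omega)
    have i0 : Fin n := ⟨0, by omega⟩
    have hdiff : ∀ i j : Fin n,
        (Pi.single i 1 - Pi.single j 1 : Fin n → ℤ) ∈ AddSubgroup.closure gen := by
      intro i j
      rcases eq_or_ne i j with rfl | hij
      · simpa using (AddSubgroup.closure gen).zero_mem
      · obtain ⟨T, hTsub, hT⟩ := Finset.exists_subset_card_eq
          (s := (Finset.univ : Finset (Fin n)) \ {i, j}) (n := k - 1)
          (by rw [Finset.card_sdiff_of_subset (Finset.subset_univ _), Finset.card_pair hij,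
                Finset.card_univ, Fintype.card_fin]; omega)
        have hiT : i ∉ T := fun h => by simpa using hTsub h
        have hjT : j ∉ T := fun h => by simpa using hTsub h
        have h1 : (fun l => if l ∈ insert i T then (1:ℤ) else 0) ∈ gen :=
          ⟨insert i T, by rw [Finset.card_insert_of_notMem hiT, hT]; omega, rfl⟩
        have h2 : (fun l => if l ∈ insert j T then (1:ℤ) else 0) ∈ gen :=
          ⟨insert j T, by rw [Finset.card_insert_of_notMem hjT, hT]; omega, rfl⟩
        have hmem := AddSubgroup.sub_mem _
          (AddSubgroup.subset_closure h1) (AddSubgroup.subset_closure h2)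
        convert hmem using 1
        funext l
        simp only [Pi.sub_apply, Pi.single_apply, Finset.mem_insert]
        by_cases hl1 : l = i <;> by_cases hl2 : l = j <;> by_cases hl3 : l ∈ T <;>
          simp_all
    set c : Fin n → ℤ := fun i => d i - m * (if i ∈ S0 then 1 else 0) with hc
    have hcsum : ∑ i, c i = 0 := by
      simp only [hc, Finset.sum_sub_distrib, ← Finset.mul_sum, sum_indicator, hS0, hm]
      ring
    have hd : d = m • (fun i => if i ∈ S0 then (1:ℤ) else 0)
        + ∑ i, c i • (Pi.single i 1 - Pi.single i0 1) := by
      funext j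
      have : (∑ i, c i • (Pi.single i 1 - Pi.single i0 1 : Fin n → ℤ)) j
          = ∑ i, c i * ((if j = i then (1:ℤ) else 0) - (if j = i0 then 1 else 0)) := by
        rw [Finset.sum_apply]
        simp [Pi.single_apply]
      have e1 : ∑ i, c i * (if j = i then (1:ℤ) else 0) = c j := by
        simp [mul_ite, Finset.sum_ite_eq]
      have e2 : ∑ i, c i * (if j = i0 then (1:ℤ) else 0) = 0 := by
        rw [← Finset.sum_mul, hcsum, zero_mul]
      rw [Pi.add_apply, this, Finset.sum_congr rfl (fun i _ => mul_sub _ _ _),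
        Finset.sum_sub_distrib, e1, e2]
      simp only [Pi.add_apply, Pi.smul_apply, smul_eq_mul, this, mul_sub,
        Finset.sum_sub_distrib, e1, e2, sub_zero, hc]
      ring
    rw [hd]
    refine AddSubgroup.add_mem _ (AddSubgroup.zsmul_mem _
      (AddSubgroup.subset_closure (show _ ∈ gen from ⟨S0, hS0, rfl⟩)) m) ?_
    exact AddSubgroup.sum_mem _ fun i _ => AddSubgroup.zsmul_mem _ (hdiff i i0) _
end

section
/- Let K be a finite collection of k-subsets of [n], w \in R^n, K^+ = {S \in K : w \cdot e_S > 0}, K^0 = {S \in K : w \cdot e_S = 0}, and t = \sum_{S \in K^+} e_S. Then a point q \in R^n satisfies: q is in the w-maximizing face of D(K) and q is a degree sequence of a subcollection of K, if and only if q - t is in D(K^0) and q - t is a degree sequence of a subcollection of K^0. -/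
open scoped Classical

/-- The indicator vector of a subset `S` of `[n]`. -/
noncomputable def eS (n : ℕ) (S : Finset (Fin n)) : Fin n → ℝ :=
  fun i => if i ∈ S then 1 else 0

/-- The zonotope generated by the hyperedges of `K`. -/
noncomputable def zono (n : ℕ) (K : Finset (Finset (Fin n))) : Set (Fin n → ℝ) :=
  {x | ∃ c : Finset (Fin n) → ℝ, (∀ S, 0 ≤ c S ∧ c S ≤ 1) ∧ x = ∑ S ∈ K, c S • eS n S}

/-- The dot product of two vectors in `ℝ^n`. -/
noncomputable def dot (n : ℕ) (w x : Fin n → ℝ) : ℝ := ∑ i, w i * x i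

/-- `x` is the degree sequence of a subcollection of `K`. -/
def IsDegSeqOf (n : ℕ) (K : Finset (Finset (Fin n))) (x : Fin n → ℝ) : Prop :=
  ∃ K' ⊆ K, x = ∑ S ∈ K', eS n S

lemma dot_sum {ι : Type*} (n : ℕ) (w : Fin n → ℝ) (A : Finset ι) (f : ι → Fin n → ℝ) :
    dot n w (∑ S ∈ A, f S) = ∑ S ∈ A, dot n w (f S) := by
  simp only [dot, Finset.sum_apply, Finset.mul_sum]
  exact Finset.sum_comm

lemma dot_smul (n : ℕ) (w x : Fin n → ℝ) (c : ℝ) :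
    dot n w (c • x) = c * dot n w x := by
  simp [dot, Finset.mul_sum, mul_left_comm]

lemma degseq_mem_zono (n : ℕ) (K : Finset (Finset (Fin n))) (x : Fin n → ℝ)
    (h : IsDegSeqOf n K x) : x ∈ zono n K := by
  obtain ⟨K', hsub, rfl⟩ := h
  refine ⟨fun S => if S ∈ K' then 1 else 0, fun S => by dsimp only; split <;> norm_num, ?_⟩
  simp only [ite_smul, one_smul, zero_smul]
  rw [Finset.sum_ite_mem, Finset.inter_eq_right.mpr hsub]

/-- A point `q` lies in the `w`-maximizing face of `D(K)` and is a degree sequence of a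
subcollection of `K` if and only if `q - t` lies in `D(K⁰)` and is a degree sequence of a
subcollection of `K⁰`, where `t = ∑_{S ∈ K⁺} e_S`. -/
theorem face_point_degree_sequence_iff (n k : ℕ) (K : Finset (Finset (Fin n)))
    (hK : ∀ S ∈ K, S.card = k) (w : Fin n → ℝ) (q : Fin n → ℝ) :
    ((q ∈ zono n K ∧ ∀ y ∈ zono n K, dot n w y ≤ dot n w q) ∧ IsDegSeqOf n K q) ↔
      ((q - ∑ S ∈ K.filter (fun S => 0 < dot n w (eS n S)), eS n S) ∈
          zono n (K.filter (fun S => dot n w (eS n S) = 0)) ∧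
        IsDegSeqOf n (K.filter (fun S => dot n w (eS n S) = 0))
          (q - ∑ S ∈ K.filter (fun S => 0 < dot n w (eS n S)), eS n S)) := by
  set d : Finset (Fin n) → ℝ := fun S => dot n w (eS n S) with hd
  set P : Finset (Finset (Fin n)) := K.filter (fun S => 0 < d S) with hP
  set Z : Finset (Finset (Fin n)) := K.filter (fun S => d S = 0) with hZ
  have hPK : P ⊆ K := Finset.filter_subset _ _
  have hZK : Z ⊆ K := Finset.filter_subset _ _
  constructor
  · rintro ⟨⟨-, hmax⟩, K', hsub, rfl⟩
    set t : Fin n → ℝ := ∑ S ∈ P, eS n S with ht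
    -- t is in the zonotope
    have htz : t ∈ zono n K := degseq_mem_zono n K t ⟨P, hPK, rfl⟩
    have hmt := hmax t htz
    rw [ht, dot_sum, dot_sum] at hmt
    -- key inequality pieces
    have hsplit : ∑ S ∈ K', d S = ∑ S ∈ K' ∩ P, d S + ∑ S ∈ K' \ P, d S :=
      (Finset.sum_inter_add_sum_sdiff K' P d).symm
    have hnp : ∀ S ∈ K' \ P, d S ≤ 0 := by
      intro S hS
      rcases Finset.mem_sdiff.mp hS with ⟨hS1, hS2⟩
      exact le_of_not_gt fun h => hS2 (Finset.mem_filter.mpr ⟨hsub hS1, h⟩)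
    have hle1 : ∑ S ∈ K' ∩ P, d S ≤ ∑ S ∈ P, d S :=
      Finset.sum_le_sum_of_subset_of_nonneg Finset.inter_subset_right
        (fun S hS _ => le_of_lt (Finset.mem_filter.mp hS).2)
    have hle2 : ∑ S ∈ K' \ P, d S ≤ 0 := Finset.sum_nonpos hnp
    have heq1 : ∑ S ∈ K' ∩ P, d S = ∑ S ∈ P, d S := by linarith [hsplit ▸ hmt]
    have heq2 : ∑ S ∈ K' \ P, d S = 0 := by linarith [hsplit ▸ hmt]
    -- P ⊆ K'
    have hPK' : P ⊆ K' := by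
      have h0 : ∑ S ∈ P \ (K' ∩ P), d S = 0 := by
        rw [Finset.sum_sdiff_eq_sub Finset.inter_subset_right, heq1, sub_self]
      intro S hS
      by_contra hSK'
      have hmem : S ∈ P \ (K' ∩ P) :=
        Finset.mem_sdiff.mpr ⟨hS, fun h => hSK' (Finset.mem_inter.mp h).1⟩
      have := (Finset.sum_eq_zero_iff_of_nonneg
        (fun S hS => le_of_lt (Finset.mem_filter.mp (Finset.mem_sdiff.mp hS).1).2)).mp h0 S hmem
      exact absurd this (ne_of_gt (Finset.mem_filter.mp hS).2)
    -- K' \ P ⊆ Z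
    have hzero : ∀ S ∈ K' \ P, d S = 0 :=
      (Finset.sum_eq_zero_iff_of_nonpos hnp).mp heq2
    have hsubZ : K' \ P ⊆ Z := fun S hS =>
      Finset.mem_filter.mpr ⟨hsub (Finset.mem_sdiff.mp hS).1, hzero S hS⟩
    have hqt : (∑ S ∈ K', eS n S) - t = ∑ S ∈ K' \ P, eS n S := by
      rw [ht, eq_comm, eq_sub_iff_add_eq]
      exact Finset.sum_sdiff hPK'
    rw [hqt]
    exact ⟨degseq_mem_zono n Z _ ⟨K' \ P, hsubZ, rfl⟩, K' \ P, hsubZ, rfl⟩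
  · rintro ⟨-, K'', hsub, heq⟩
    set t : Fin n → ℝ := ∑ S ∈ P, eS n S with ht
    have hPdisj : Disjoint P K'' := by
      rw [Finset.disjoint_left]
      intro S hSP hSK
      have h1 := (Finset.mem_filter.mp hSP).2
      have h2 := (Finset.mem_filter.mp (hsub hSK)).2
      exact absurd h2 (ne_of_gt h1)
    have hq : q = ∑ S ∈ P ∪ K'', eS n S := by
      rw [Finset.sum_union hPdisj, ← ht, ← heq]
      ring
    have hsubK : P ∪ K'' ⊆ K :=
      Finset.union_subset hPK (hsub.trans hZK)
    have hdq : dot n w q = ∑ S ∈ P, d S := by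
      rw [hq, dot_sum, Finset.sum_union hPdisj]
      have : ∑ S ∈ K'', d S = 0 :=
        Finset.sum_eq_zero fun S hS => (Finset.mem_filter.mp (hsub hS)).2
      rw [this, add_zero]
    refine ⟨⟨degseq_mem_zono n K q (hq ▸ ⟨P ∪ K'', hsubK, rfl⟩), ?_⟩, P ∪ K'', hsubK, hq⟩
    rintro y ⟨c, hc, rfl⟩
    rw [dot_sum, hdq]
    have : ∀ S, dot n w (c S • eS n S) = c S * d S := fun S => dot_smul n w _ _
    simp only [this]
    calc ∑ S ∈ K, c S * d S ≤ ∑ S ∈ K, (if S ∈ P then d S else 0) := by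
          apply Finset.sum_le_sum
          intro S hS
          split
          · next h =>
              have hd0 := (Finset.mem_filter.mp h).2
              nlinarith [(hc S).1, (hc S).2]
          · next h =>
              have : d S ≤ 0 := by
                by_contra hcon
                exact h (Finset.mem_filter.mpr ⟨hS, lt_of_not_ge fun hg => hcon (by linarith)⟩)
              nlinarith [(hc S).1, (hc S).2]
      _ = ∑ S ∈ P, d S := by rw [Finset.sum_ite_mem, Finset.inter_eq_right.mpr hPK]
end

section
/- Define f: R^n \to R^{n+1} by f(d_1,...,d_n) = (d_1,...,d_n, (d_1+...+d_n)/k). A vector d \in Z^n is the degree sequence of a k-uniform hypergraph on [n] if and only if f(d) is the degree sequence of a (k+1)-uniform hypergraph on [n+1]. -/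
/-- `d` is the degree sequence of a `k`-uniform hypergraph on `[n]`. -/
def IsDegSeq (n k : ℕ) (d : Fin n → ℤ) : Prop :=
  ∃ K : Finset (Finset (Fin n)), (∀ S ∈ K, S.card = k) ∧
    ∀ i, d i = ((K.filter (fun S => i ∈ S)).card : ℤ)

lemma double_count {m : ℕ} (K : Finset (Finset (Fin m))) :
    ∑ i, ((K.filter (fun S => i ∈ S)).card) = ∑ S ∈ K, S.card := by
  simp only [Finset.card_filter]
  rw [Finset.sum_comm]
  refine Finset.sum_congr rfl fun S _ => ?_
  rw [← Finset.card_filter]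
  congr 1
  exact Finset.filter_univ_mem S

/-- With `f(d₁,…,dₙ) = (d₁,…,dₙ,(d₁+⋯+dₙ)/k)`, a vector `d ∈ ℤ^n` is the degree sequence of
a `k`-uniform hypergraph on `[n]` if and only if `f(d)` is the degree sequence of a
`(k+1)`-uniform hypergraph on `[n+1]`. -/
theorem isDegSeq_iff_snoc (n k : ℕ) (hk : 0 < k) (d : Fin n → ℤ) :
    IsDegSeq n k d ↔
      ∃ d' : Fin (n + 1) → ℤ, IsDegSeq (n + 1) (k + 1) d' ∧
        (∀ i : Fin n, d' i.castSucc = d i) ∧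
        ((d' (Fin.last n) : ℝ) = (∑ i, (d i : ℝ)) / k) := by
  have hk0 : (k : ℝ) ≠ 0 := Nat.cast_ne_zero.mpr hk.ne'
  constructor
  · rintro ⟨K, hcard, hdeg⟩
    set e : Finset (Fin n) → Finset (Fin (n + 1)) :=
      fun S => insert (Fin.last n) (S.image Fin.castSucc) with he
    have hmem : ∀ (i : Fin n) (S : Finset (Fin n)), i.castSucc ∈ e S ↔ i ∈ S := by
      intro i S
      simp [he, Fin.castSucc_lt_last i |>.ne, Fin.castSucc_injective n |>.eq_iff]
    have hinj : Function.Injective e := by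
      intro S T h
      ext i
      rw [← hmem i S, ← hmem i T, h]
    refine ⟨Fin.snoc d (K.card : ℤ), ⟨K.image e, ?_, ?_⟩, ?_, ?_⟩
    · intro S hS
      obtain ⟨T, hT, rfl⟩ := Finset.mem_image.mp hS
      have hlast : Fin.last n ∉ T.image Fin.castSucc := by
        simp [Fin.castSucc_lt_last _ |>.ne]
      rw [he]
      simp only [Finset.card_insert_of_notMem hlast,
        Finset.card_image_of_injective _ (Fin.castSucc_injective n), hcard T hT]
    · intro j
      induction j using Fin.lastCases with
      | last =>
        have : (K.image e).filter (fun S => Fin.last n ∈ S) = K.image e := by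
          refine Finset.filter_true_of_mem fun S hS => ?_
          obtain ⟨T, hT, rfl⟩ := Finset.mem_image.mp hS
          simp [he]
        rw [this, Fin.snoc_last, Finset.card_image_of_injective _ hinj]
      | cast i =>
        rw [Fin.snoc_castSucc, hdeg i]
        congr 1
        rw [Finset.filter_image]
        rw [Finset.card_image_of_injective _ hinj]
        congr 1
        ext S
        simp only [Finset.mem_filter, hmem]
    · intro i; rw [Fin.snoc_castSucc]
    · rw [Fin.snoc_last]
      have hsum : ∑ i, d i = (k * K.card : ℤ) := by
        have := double_count K
        have h2 : ∑ S ∈ K, S.card = k * K.card := by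
          rw [Finset.sum_congr rfl hcard]; simp [mul_comm]
        calc ∑ i, d i = ∑ i, ((K.filter (fun S => i ∈ S)).card : ℤ) := by
              exact Finset.sum_congr rfl fun i _ => hdeg i
          _ = (k * K.card : ℤ) := by exact_mod_cast (this.trans h2)
      have : (∑ i, (d i : ℝ)) = k * K.card := by exact_mod_cast hsum
      rw [this]; field_simp; norm_cast
  · rintro ⟨d', ⟨K', hcard', hdeg'⟩, hcast, hlast⟩
    -- k * d' last = ∑ d i  in ℤ
    have hkz : (k : ℤ) * d' (Fin.last n) = ∑ i, d i := by
      have : (k : ℝ) * (d' (Fin.last n) : ℝ) = ∑ i, (d i : ℝ) := by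
        rw [hlast]; field_simp
      exact_mod_cast this
    -- total degree count
    have htot : ∑ j, d' j = ((k : ℤ) + 1) * K'.card := by
      have h1 : ∑ j, d' j = ∑ j, ((K'.filter (fun S => j ∈ S)).card : ℤ) :=
        Finset.sum_congr rfl fun j _ => hdeg' j
      have h2 : ∑ S ∈ K', S.card = (k + 1) * K'.card := by
        rw [Finset.sum_congr rfl hcard']; simp [mul_comm]
      rw [h1]
      exact_mod_cast (double_count K').trans h2
    have hsplit : ∑ j, d' j = ((k : ℤ) + 1) * d' (Fin.last n) := by
      rw [Fin.sum_univ_castSucc]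
      have : ∑ i : Fin n, d' i.castSucc = ∑ i, d i :=
        Finset.sum_congr rfl fun i _ => hcast i
      rw [this, ← hkz]; ring
    have hlastcard : d' (Fin.last n) = (K'.card : ℤ) := by
      have hne : ((k : ℤ) + 1) ≠ 0 := by positivity
      have := hsplit.symm.trans htot
      exact mul_left_cancel₀ hne this
    -- every edge contains last
    have hall : ∀ S ∈ K', Fin.last n ∈ S := by
      have hfc : (K'.filter (fun S => Fin.last n ∈ S)).card = K'.card := by
        have := (hdeg' (Fin.last n)).symm.trans hlastcard
        exact_mod_cast this
      have hfe : K'.filter (fun S => Fin.last n ∈ S) = K' :=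
        Finset.eq_of_subset_of_card_le (Finset.filter_subset _ _) (le_of_eq hfc.symm)
      intro S hS
      have := hfe ▸ hS
      exact (Finset.mem_filter.mp this).2
    set g : Finset (Fin (n + 1)) → Finset (Fin n) :=
      fun S => Finset.univ.filter (fun i => i.castSucc ∈ S) with hg
    have hgmem : ∀ (i : Fin n) S, i ∈ g S ↔ i.castSucc ∈ S := by
      intro i S; simp [hg]
    have hrecon : ∀ S ∈ K', S = insert (Fin.last n) ((g S).image Fin.castSucc) := by
      intro S hS
      ext j
      induction j using Fin.lastCases with
      | last => simp [hall S hS]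
      | cast i =>
        simp [Fin.castSucc_lt_last i |>.ne, Fin.castSucc_injective n |>.eq_iff, hgmem,
          and_comm]
    have hinjOn : Set.InjOn g K' := by
      intro S hS T hT h
      rw [hrecon S hS, hrecon T hT, h]
    have hgcard : ∀ S ∈ K', (g S).card = k := by
      intro S hS
      have h1 : S.card = (g S).card + 1 := by
        conv_lhs => rw [hrecon S hS]
        have hl : Fin.last n ∉ (g S).image Fin.castSucc := by
          simp [Fin.castSucc_lt_last _ |>.ne]
        rw [Finset.card_insert_of_notMem hl,
          Finset.card_image_of_injective _ (Fin.castSucc_injective n)]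
      have := hcard' S hS
      omega
    refine ⟨K'.image g, fun T hT => ?_, fun i => ?_⟩
    · obtain ⟨S, hS, rfl⟩ := Finset.mem_image.mp hT
      exact hgcard S hS
    · rw [← hcast i, hdeg' i.castSucc]
      congr 1
      rw [Finset.filter_image]
      have hfilter : K'.filter (fun S => i ∈ g S) = K'.filter (fun S => i.castSucc ∈ S) := by
        refine Finset.filter_congr fun S _ => ?_
        simp [hgmem]
      rw [hfilter, Finset.card_image_of_injOn
        (hinjOn.mono (Finset.filter_subset _ _))]
end

section
/- Suppose p = \sum_{S \in K} e_S where K is a set of triples (q,r,s) with q \in [5], r,s \in [6], and p has tripartite degree sequence ((11,9,6,3,1),(2,4,6,8,3,7),(2,4,6,8,3,7)). Define b_{rs} = |{q : (q,r,s) \in K}|. Then B = (b_{rs}) has row and column sums both equal to (2,4,6,8,3,7), all entries in {0,...,5}, and for each q \in [5], \mu_1+...+\mu_q \leq \sum_{r,s} \min(q, b_{rs}) where \mu = (11,9,6,3,1). -/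
/-- `μ = (11,9,6,3,1)`. -/
def μ : Fin 5 → ℕ := ![11, 9, 6, 3, 1]

/-- `v = (2,4,6,8,3,7)`. -/
def v : Fin 6 → ℕ := ![2, 4, 6, 8, 3, 7]

/-- If `K` is a `3`-partite `3`-uniform hypergraph on parts `[5], [6], [6]` with tripartite
degree sequence `((11,9,6,3,1),(2,4,6,8,3,7),(2,4,6,8,3,7))`, and
`b_{rs} = #{q : (q,r,s) ∈ K}`, then `B` has row and column sums `(2,4,6,8,3,7)`, entries in
`{0,…,5}`, and `μ₁+⋯+μ_q ≤ ∑_{r,s} min(q, b_{rs})` for each `q ∈ [5]`. -/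
theorem degree_matrix_conditions (K : Finset (Fin 5 × Fin 6 × Fin 6))
    (h1 : ∀ q : Fin 5, (K.filter (fun t => t.1 = q)).card = μ q)
    (h2 : ∀ r : Fin 6, (K.filter (fun t => t.2.1 = r)).card = v r)
    (h3 : ∀ s : Fin 6, (K.filter (fun t => t.2.2 = s)).card = v s) :
    (∀ r : Fin 6, ∑ s : Fin 6,
        (K.filter (fun t => t.2.1 = r ∧ t.2.2 = s)).card = v r) ∧
    (∀ s : Fin 6, ∑ r : Fin 6,
        (K.filter (fun t => t.2.1 = r ∧ t.2.2 = s)).card = v s) ∧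
    (∀ r s : Fin 6, (K.filter (fun t => t.2.1 = r ∧ t.2.2 = s)).card ≤ 5) ∧
    (∀ q : ℕ, q ≤ 5 →
      (∑ j ∈ Finset.univ.filter (fun j : Fin 5 => j.val < q), μ j) ≤
        ∑ r : Fin 6, ∑ s : Fin 6,
          min q (K.filter (fun t => t.2.1 = r ∧ t.2.2 = s)).card) := by
  classical
  refine ⟨?_, ?_, ?_, ?_⟩
  · intro r
    rw [← h2 r]
    rw [Finset.card_eq_sum_card_fiberwise (f := fun t => t.2.2) (t := Finset.univ)
      (fun x _ => Finset.mem_univ _)]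
    refine Finset.sum_congr rfl fun s _ => ?_
    congr 1
    rw [Finset.filter_filter]
  · intro s
    rw [← h3 s]
    rw [Finset.card_eq_sum_card_fiberwise (f := fun t => t.2.1) (t := Finset.univ)
      (fun x _ => Finset.mem_univ _)]
    refine Finset.sum_congr rfl fun r _ => ?_
    congr 1
    ext t
    simp only [Finset.mem_filter]
    tauto
  · intro r s
    have : (K.filter (fun t => t.2.1 = r ∧ t.2.2 = s)).card ≤ (Finset.univ : Finset (Fin 5)).card := by
      apply Finset.card_le_card_of_injOn (fun t => t.1) (fun x _ => Finset.mem_univ _)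
      intro a ha b hb hab
      simp only [Finset.coe_filter, Set.mem_setOf_eq] at ha hb
      obtain ⟨_, ha1, ha2⟩ := ha
      obtain ⟨_, hb1, hb2⟩ := hb
      exact Prod.ext hab (Prod.ext (ha1.trans hb1.symm) (ha2.trans hb2.symm))
    simpa using this
  · intro q hq
    set A := K.filter (fun t => t.1.val < q) with hA
    have hLHS : (∑ j ∈ Finset.univ.filter (fun j : Fin 5 => j.val < q), μ j) = A.card := by
      rw [Finset.card_eq_sum_card_fiberwise (f := fun t => t.1)
        (t := Finset.univ.filter (fun j : Fin 5 => j.val < q))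
        (fun x hx => by simp only [hA, Finset.mem_coe, Finset.mem_filter] at hx ⊢; exact ⟨Finset.mem_univ _, hx.2⟩)]
      refine Finset.sum_congr rfl fun j hj => ?_
      simp only [Finset.mem_filter] at hj
      rw [← h1 j, hA, Finset.filter_filter]
      congr 1
      apply Finset.filter_congr
      intro t _
      constructor
      · exact fun h => ⟨h ▸ hj.2, h⟩
      · exact fun h => h.2
    rw [hLHS]
    have hsplit : A.card = ∑ p ∈ (Finset.univ : Finset (Fin 6 × Fin 6)),
        (A.filter (fun t => t.2 = p)).card := by
      apply Finset.card_eq_sum_card_fiberwise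
      intro x _
      exact Finset.mem_univ _
    rw [hsplit, Fintype.sum_prod_type]
    refine Finset.sum_le_sum fun r _ => Finset.sum_le_sum fun s _ => ?_
    apply le_min
    · have : (A.filter (fun t => t.2 = (r, s))).card ≤ (Finset.range q).card := by
        apply Finset.card_le_card_of_injOn (fun t => t.1.val)
        · intro x hx
          simp only [hA, Finset.mem_coe, Finset.mem_filter] at hx
          exact Finset.mem_range.mpr hx.1.2
        · intro a ha b hb hab
          simp only [hA, Finset.coe_filter, Set.mem_setOf_eq] at ha hb
          exact Prod.ext (Fin.ext hab) (ha.2.trans hb.2.symm)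
      simpa using this
    · apply Finset.card_le_card
      intro t ht
      simp only [hA, Finset.mem_filter] at ht ⊢
      obtain ⟨⟨ht1, _⟩, ht2⟩ := ht
      exact ⟨ht1, by rw [ht2], by rw [ht2]⟩
end

section
/- Let W_1,...,W_k be finite disjoint vertex sets and N an integer larger than each |W_i|. Assign weight -(1+N+N^2+...+N^{k-2}) to each vertex of W_1 and weight N^{i-2} to each vertex of W_i for 2 \leq i \leq k. Then a k-subset S of W_1 \cup ... \cup W_k has total weight 0 if and only if S contains exactly one vertex from each W_i. -/
private lemma abs_digit_sum_le (N : ℤ) (hN : 1 ≤ N) (d : ℕ → ℤ) (h : ∀ i, |d i| < N) :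
    ∀ n, |∑ j ∈ Finset.range n, d j * N ^ j| ≤ N ^ n - 1 := by
  intro n
  induction n with
  | zero => simp
  | succ n ih =>
      rw [Finset.sum_range_succ]
      have h1 : |d n| ≤ N - 1 := by have := h n; omega
      have h2 : (0:ℤ) < N ^ n := pow_pos (by omega) n
      calc |∑ j ∈ Finset.range n, d j * N ^ j + d n * N ^ n|
          ≤ |∑ j ∈ Finset.range n, d j * N ^ j| + |d n * N ^ n| := abs_add_le _ _
        _ ≤ (N ^ n - 1) + (N - 1) * N ^ n := by
            rw [abs_mul, abs_of_pos h2]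
            have h3 : |d n| * N ^ n ≤ (N - 1) * N ^ n :=
              mul_le_mul_of_nonneg_right h1 (le_of_lt h2)
            omega
        _ = N ^ (n+1) - 1 := by ring

private lemma digits_eq_zero (N : ℤ) (hN : 1 ≤ N) (d : ℕ → ℤ) (h : ∀ i, |d i| < N) :
    ∀ n, (∑ j ∈ Finset.range n, d j * N ^ j) = 0 → ∀ j < n, d j = 0 := by
  intro n
  induction n with
  | zero => intro _ j hj; omega
  | succ n ih =>
      intro hsum j hj
      rw [Finset.sum_range_succ] at hsum
      have h2 : (0:ℤ) < N ^ n := pow_pos (by omega) n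
      have hb := abs_digit_sum_le N hN d h n
      have hdn : d n = 0 := by
        by_contra hne
        have h1 : 1 ≤ |d n| := abs_pos.mpr hne
        have h4 : N ^ n ≤ |d n * N ^ n| := by
          rw [abs_mul, abs_of_pos h2]; nlinarith
        have h5 : |d n * N ^ n| = |∑ j ∈ Finset.range n, d j * N ^ j| := by
          rw [show d n * N ^ n = -(∑ j ∈ Finset.range n, d j * N ^ j) by linarith, abs_neg]
        omega
      rcases Nat.lt_succ_iff_lt_or_eq.mp hj with h' | rfl
      · exact ih (by simpa [hdn] using hsum) j h'
      · exact hdn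

/-- Let `W₁,…,W_k` be disjoint finite vertex sets (of sizes `m i`) and `N` an integer
larger than each `|W_i|`. Give each vertex of `W₁` weight `-(1+N+⋯+N^{k-2})` and each
vertex of `W_i` weight `N^{i-2}` for `2 ≤ i ≤ k`. Then a `k`-subset `S` of the vertices has
total weight `0` if and only if it contains exactly one vertex from each `W_i`. -/
theorem weight_zero_iff_transversal (k : ℕ) (hk : 2 ≤ k) (m : Fin k → ℕ) (N : ℤ)
    (hN : ∀ i, (m i : ℤ) < N)
    (S : Finset (Σ i : Fin k, Fin (m i))) (hS : S.card = k) :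
    (∑ v ∈ S, (if v.1 = (⟨0, by omega⟩ : Fin k) then -(∑ j ∈ Finset.range (k - 1), N ^ j)
        else N ^ (v.1.val - 1))) = 0 ↔
      ∀ i : Fin k, (S.filter (fun v => v.1 = i)).card = 1 := by
  obtain ⟨n, rfl⟩ : ∃ n, k = n + 1 := ⟨k - 1, by omega⟩
  have hN1 : (1:ℤ) ≤ N := by
    have := hN 0
    have h0 : (0:ℤ) ≤ (m 0 : ℤ) := Int.natCast_nonneg _
    omega
  set c : Fin (n+1) → ℕ := fun i => (S.filter (fun v => v.1 = i)).card with hc_def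
  -- count bound
  have hcm : ∀ i, c i ≤ m i := by
    intro i
    have h : (S.filter (fun v => v.1 = i)).card ≤ (Finset.range (m i)).card := by
      apply Finset.card_le_card_of_injOn (fun v => (v.2.val : ℕ))
      · intro v hv
        have hv1 := (Finset.mem_filter.mp hv).2
        have h2 := v.2.isLt
        have h3 : m v.fst = m i := by rw [hv1]
        exact Finset.mem_range.mpr (by show (v.2.val : ℕ) < m i; omega)
      · intro v hv w hw hvw
        obtain ⟨a, x⟩ := v
        obtain ⟨b, y⟩ := w
        have ha := (Finset.mem_filter.mp (Finset.mem_coe.mp hv)).2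
        have hb := (Finset.mem_filter.mp (Finset.mem_coe.mp hw)).2
        simp only at ha hb
        subst ha; subst hb
        simp only at hvw
        exact congrArg _ (Fin.ext hvw)
    simpa using h
  have hcN : ∀ i, (c i : ℤ) < N := fun i =>
    lt_of_le_of_lt (by exact_mod_cast hcm i) (hN i)
  -- total count
  have hsum_c : ∑ i : Fin (n+1), c i = n + 1 := by
    have h := Finset.card_eq_sum_card_fiberwise
      (s := S) (t := (Finset.univ : Finset (Fin (n+1)))) (f := Sigma.fst)
      (fun v _ => Finset.mem_univ v.1)
    rw [hS] at h
    exact h.symm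
  -- digits
  set d : ℕ → ℤ := fun j => if h : j < n then ((c ⟨j+1, by omega⟩ : ℤ) - c 0) else 0
    with hd_def
  have hdabs : ∀ j, |d j| < N := by
    intro j
    simp only [hd_def]
    split
    · have h1 := hcN ⟨j+1, by omega⟩
      have h2 := hcN 0
      have h3 : (0:ℤ) ≤ (c ⟨j+1, by omega⟩ : ℤ) := Int.natCast_nonneg _
      have h4 : (0:ℤ) ≤ (c 0 : ℤ) := Int.natCast_nonneg _
      rw [abs_lt]; omega
    · simp only [abs_zero]; omega
  -- key rewriting of the weighted sum
  have hz : (⟨0, by omega⟩ : Fin (n+1)) = 0 := rfl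
  have key : (∑ v ∈ S, (if v.1 = (⟨0, by omega⟩ : Fin (n+1)) then
        -(∑ j ∈ Finset.range (n + 1 - 1), N ^ j) else N ^ (v.1.val - 1)))
      = ∑ j ∈ Finset.range n, d j * N ^ j := by
    have step1 : (∑ v ∈ S, (if v.1 = (⟨0, by omega⟩ : Fin (n+1)) then
          -(∑ j ∈ Finset.range (n + 1 - 1), N ^ j) else N ^ (v.1.val - 1)))
        = ∑ i : Fin (n+1), (c i : ℤ) * (if i = 0 then
            -(∑ j ∈ Finset.range n, N ^ j) else N ^ (i.val - 1)) := by
      rw [← Finset.sum_fiberwise_of_maps_to (g := Sigma.fst) (t := Finset.univ)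
        (fun v _ => Finset.mem_univ v.1)]
      refine Finset.sum_congr rfl fun i _ => ?_
      rw [Finset.sum_congr rfl (fun v hv => by
        rw [(Finset.mem_filter.mp hv).2]), Finset.sum_const, nsmul_eq_mul]
      rw [hz, Nat.add_sub_cancel]
    rw [step1, Fin.sum_univ_succ]
    have hsucc : ∀ i : Fin n, ((c i.succ : ℤ) * (if i.succ = 0 then
        -(∑ j ∈ Finset.range n, N ^ j) else N ^ (i.succ.val - 1)))
        = (d i.val + (c 0 : ℤ)) * N ^ i.val := by
      intro i
      rw [if_neg (Fin.succ_ne_zero i)]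
      have hlt : i.val < n := i.isLt
      simp only [hd_def, hlt, dif_pos]
      have he : (⟨i.val + 1, by omega⟩ : Fin (n+1)) = i.succ := rfl
      rw [he, Fin.val_succ, Nat.add_sub_cancel]
      ring
    rw [Finset.sum_congr rfl (fun i _ => hsucc i)]
    rw [show (∑ i : Fin n, (d i.val + (c 0 : ℤ)) * N ^ i.val)
        = ∑ j ∈ Finset.range n, (d j + (c 0 : ℤ)) * N ^ j from
      Fin.sum_univ_eq_sum_range (fun j => (d j + (c 0 : ℤ)) * N ^ j) n]
    rw [if_pos rfl]
    simp only [add_mul]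
    rw [Finset.sum_add_distrib, ← Finset.mul_sum]
    ring
  rw [key]
  constructor
  · intro h0
    have hall := digits_eq_zero N hN1 d hdabs n h0
    have hceq : ∀ j : Fin n, c j.succ = c 0 := by
      intro j
      have hd0 := hall j.val j.isLt
      simp only [hd_def, j.isLt, dif_pos] at hd0
      have h1 : (c ⟨j.val+1, by omega⟩ : ℤ) = (c 0 : ℤ) := by omega
      have h2 : c ⟨j.val+1, by omega⟩ = c 0 := by exact_mod_cast h1
      exact h2
    have hc0 : c 0 = 1 := by
      rw [Fin.sum_univ_succ, Finset.sum_congr rfl (fun j _ => hceq j),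
        Finset.sum_const] at hsum_c
      simp only [Finset.card_univ, Fintype.card_fin, smul_eq_mul, mul_one] at hsum_c
      have h2 : (n + 1) * c 0 = (n + 1) * 1 := by
        rw [add_mul, one_mul, mul_one]
        linarith [hsum_c]
      exact Nat.eq_of_mul_eq_mul_left (Nat.succ_pos n) h2
    intro i
    induction i using Fin.cases with
    | zero => exact hc0
    | succ j =>
        have : c j.succ = 1 := by rw [hceq j, hc0]
        exact this
  · intro h1
    refine Finset.sum_eq_zero fun j hj => ?_
    have hj' := Finset.mem_range.mp hj
    simp only [hd_def, hj', dif_pos]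
    rw [show c ⟨j+1, by omega⟩ = 1 from h1 _, show c 0 = 1 from h1 _]
    ring
end
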